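/- If q ∈ ℚ and tan²(qπ) ∈ ℚ ∪ {∞} (i.e., qπ is a pure geodetic angle with rational tangent squared), then tan(qπ) ∈ {0, ±√3, ±1/√3, ±1}. -/

import Mathlib

open Polynomial

lemma pow_one_integral {z : ℂ} {n : ℕ} (hn : n ≠ 0) (h : z ^ n = 1) : IsIntegral ℤ z := by
  refine ⟨X ^ n - C 1, Polynomial.monic_X_pow_sub_C 1 hn, ?_⟩
  simp [h]

lemma exp_integral (q : ℚ) : IsIntegral ℤ (Complex.exp (q * Real.pi * Complex.I)) := by
  apply pow_one_integral (n := 2 * q.den) (by positivity)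
  rw [← Complex.exp_nat_mul]
  have hq : (q : ℂ) * (q.den : ℂ) = (q.num : ℂ) := by
    exact_mod_cast congrArg (Rat.cast (K := ℂ)) (Rat.mul_den_eq_num q)
  have : ((2 * q.den : ℕ) : ℂ) * ((q : ℂ) * (Real.pi : ℂ) * Complex.I)
      = (q.num : ℤ) * (2 * (Real.pi : ℂ) * Complex.I) := by
    push_cast
    linear_combination (2 * (Real.pi : ℂ) * Complex.I) * hq
  rw [this, Complex.exp_int_mul_two_pi_mul_I]

lemma two_cos_integral (q : ℚ) : IsIntegral ℤ ((2 : ℂ) * Complex.cos (q * Real.pi)) := by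
  have h1 := exp_integral q
  have h2 := exp_integral (-q)
  rw [show ((-q : ℚ) : ℂ) * Real.pi * Complex.I = -((q:ℂ) * Real.pi * Complex.I) by push_cast; ring] at h2
  have : (2 : ℂ) * Complex.cos (q * Real.pi)
      = Complex.exp ((q:ℂ) * Real.pi * Complex.I) + Complex.exp (-((q:ℂ) * Real.pi * Complex.I)) := by
    rw [Complex.cos]
    ring_nf
  rw [this]
  exact h1.add h2

/-- Niven: if cos(qπ) is rational then it is 0, ±1/2 or ±1. -/
lemma niven_aux (q : ℚ) (r : ℚ) (h : Real.cos (q * Real.pi) = (r : ℝ)) :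
    r = 0 ∨ r = 1/2 ∨ r = -(1/2) ∨ r = 1 ∨ r = -1 := by
  have hint : IsIntegral ℤ ((2 * r : ℚ)) := by
    have := two_cos_integral q
    have hc : ((2 * r : ℚ) : ℂ) = (2 : ℂ) * Complex.cos ((q : ℂ) * (Real.pi : ℂ)) := by
      have e : ((q : ℂ) * (Real.pi : ℂ)) = (((q : ℝ) * Real.pi : ℝ) : ℂ) := by push_cast; ring
      rw [e, ← Complex.ofReal_cos, h]
      push_cast
      ring
    rw [← isIntegral_algebraMap_iff (algebraMap ℚ ℂ).injective]
    simpa [hc] using this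
  obtain ⟨n, hn⟩ := IsIntegrallyClosed.isIntegral_iff.mp hint
  have hb : |Real.cos (q * Real.pi)| ≤ 1 := Real.abs_cos_le_one _
  rw [h] at hb
  have hr : (2 : ℚ) * r = n := by exact_mod_cast hn.symm
  have hn2 : |(n : ℚ)| ≤ 2 := by
    rw [← hr]
    have : |(r : ℝ)| ≤ 1 := hb
    have : |r| ≤ 1 := by exact_mod_cast this
    rw [abs_mul]
    calc |(2:ℚ)| * |r| ≤ 2 * 1 := by rw [abs_two]; nlinarith [abs_nonneg r]
    _ = 2 := by norm_num
  have hn3 : |n| ≤ 2 := by exact_mod_cast hn2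
  obtain ⟨hl, hr2⟩ := abs_le.mp hn3
  interval_cases n <;> push_cast at hr <;>
    first
      | (left; linarith)
      | (right; left; linarith)
      | (right; right; left; linarith)
      | (right; right; right; left; linarith)
      | (right; right; right; right; linarith)

/-- If `q ∈ ℚ` and `tan²(qπ)` is rational or infinite (i.e. `cos(qπ) = 0`),
then `tan(qπ) ∈ {0, ±√3, ±1/√3, ±1}`. -/
theorem stmt_15 (q : ℚ)
    (h : (∃ r : ℚ, (Real.tan (q * Real.pi)) ^ 2 = (r : ℝ)) ∨ Real.cos (q * Real.pi) = 0) :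
    Real.tan (q * Real.pi) ∈
      ({0, Real.sqrt 3, -Real.sqrt 3, 1 / Real.sqrt 3, -(1 / Real.sqrt 3), 1, -1} : Set ℝ) := by
  set t := Real.tan (q * Real.pi) with ht
  by_cases hc : Real.cos (q * Real.pi) = 0
  · left
    rw [ht, Real.tan_eq_sin_div_cos, hc, div_zero]
  rcases h with ⟨r, hr⟩ | h'
  swap
  · exact absurd h' hc
  -- r ≥ 0
  have hr0 : (0 : ℚ) ≤ r := by
    have : (0:ℝ) ≤ (r:ℝ) := hr ▸ sq_nonneg t
    exact_mod_cast this
  have h1r : (1 + r : ℚ) ≠ 0 := by positivity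
  -- cos(2qπ) = (1 - r)/(1 + r)
  have htan : (1 + t ^ 2)⁻¹ = Real.cos (q * Real.pi) ^ 2 := Real.inv_one_add_tan_sq hc
  have hcos2 : Real.cos ((2 * q : ℚ) * Real.pi) = (((1 - r) / (1 + r) : ℚ) : ℝ) := by
    have e : ((2 * q : ℚ) : ℝ) * Real.pi = 2 * ((q : ℝ) * Real.pi) := by push_cast; ring
    rw [e, Real.cos_two_mul]
    have hcs : Real.cos (q * Real.pi) ^ 2 = 1 / (1 + (r : ℝ)) := by
      have h1r' : (1 : ℝ) + r ≠ 0 := by exact_mod_cast h1r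
      rw [hr] at htan
      rw [← htan, one_div, inv_inj]
    rw [hcs]
    have h1r' : (1 : ℝ) + r ≠ 0 := by exact_mod_cast h1r
    push_cast
    field_simp
    ring
  have := niven_aux (2 * q) ((1 - r) / (1 + r)) hcos2
  -- solve for r in each case
  have hrv : r = 1 ∨ r = 1/3 ∨ r = 3 ∨ r = 0 := by
    rcases this with h0 | h0 | h0 | h0 | h0 <;>
      [ (left; field_simp at h0; linarith);
        (right; left; field_simp at h0; linarith);
        (right; right; left; field_simp at h0; linarith);
        (right; right; right; field_simp at h0; linarith);
        (exfalso; field_simp at h0; linarith) ]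
  have sqrt3 : Real.sqrt 3 ^ 2 = 3 := Real.sq_sqrt (by norm_num)
  have sqrt3pos : (0:ℝ) < Real.sqrt 3 := Real.sqrt_pos.mpr (by norm_num)
  rcases hrv with hv | hv | hv | hv <;> subst hv
  · -- t² = 1
    have : t ^ 2 = 1 ^ 2 := by rw [hr]; norm_num
    rcases sq_eq_sq_iff_eq_or_eq_neg.mp this with h | h
    · exact Or.inr (Or.inr (Or.inr (Or.inr (Or.inr (Or.inl h)))))
    · exact Or.inr (Or.inr (Or.inr (Or.inr (Or.inr (Or.inr h)))))
  · -- t² = 1/3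
    have : t ^ 2 = (1 / Real.sqrt 3) ^ 2 := by
      rw [hr, div_pow, sqrt3]; norm_num
    rcases sq_eq_sq_iff_eq_or_eq_neg.mp this with h | h
    · exact Or.inr (Or.inr (Or.inr (Or.inl h)))
    · exact Or.inr (Or.inr (Or.inr (Or.inr (Or.inl h))))
  · -- t² = 3
    have : t ^ 2 = Real.sqrt 3 ^ 2 := by rw [hr, sqrt3]; norm_num
    rcases sq_eq_sq_iff_eq_or_eq_neg.mp this with h | h
    · exact Or.inr (Or.inl h)
    · exact Or.inr (Or.inr (Or.inl h))
  · -- t² = 0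
    left
    have : t ^ 2 = 0 := by rw [hr]; norm_num
    exact pow_eq_zero_iff two_ne_zero |>.mp this
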